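/- Inhomogeneous covering theorem: Let Λ ⊆ ℝ^n be a full-rank lattice, V = ⋃_{i=1}^k (v_i + Λ) a discrete lattice-periodic set with pairwise distinct cosets, ℓ ∈ ℕ with ℓ ≥ 1, and let D₁, D₂ ⊆ ℝ^n be bounded measurable sets with vol(D₁) + vol(D₂) > ℓ·det(Λ)/k and such that every translate of D₁ and every translate of D₂ contains at most ℓ points of V. Then every translate of D₁ − D₂ contains at least ℓ points of V − V. -/

import Mathlib

open MeasureTheory Set Pointwise
open scoped ENNReal

/-- The full-rank lattice `B·ℤⁿ` determined by an invertible matrix `B`. -/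
def latticeOf {n : ℕ} (B : Matrix (Fin n) (Fin n) ℝ) : Set (Fin n → ℝ) :=
  {x | ∃ m : Fin n → ℤ, x = B.mulVec (fun i => (m i : ℝ))}

set_option maxHeartbeats 1000000
set_option synthInstance.maxHeartbeats 200000

lemma key_int {n k : ℕ} (b : Module.Basis (Fin n) ℝ (Fin n → ℝ)) (v : Fin k → (Fin n → ℝ))
    (D : Set (Fin n → ℝ)) (hD : MeasurableSet D) :
    ∫⁻ t in ZSpan.fundamentalDomain b,
      ∑' (p : Fin k × (Submodule.span ℤ (Set.range ⇑b))),
        D.indicator (fun _ => (1:ℝ≥0∞)) (v p.1 + (p.2 : Fin n → ℝ) - t)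
      = k * volume D := by
  set L := Submodule.span ℤ (Set.range ⇑b) with hLdef
  set F := ZSpan.fundamentalDomain b with hFdef
  have hFd := ZSpan.isAddFundamentalDomain b (volume : Measure (Fin n → ℝ))
  haveI : MeasurableVAdd (↥L) (Fin n → ℝ) := by
    refine { measurable_const_vadd := fun c => ?_, measurable_vadd_const := fun x => ?_ }
    · show Measurable fun t : Fin n → ℝ => (c : Fin n → ℝ) + t
      exact measurable_const.add measurable_id
    · show Measurable fun c : ↥L => (c : Fin n → ℝ) + x
      exact measurable_subtype_coe.add_const x
  haveI : VAddInvariantMeasure (↥L) (Fin n → ℝ) volume := by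
    refine ⟨fun c s hs => ?_⟩
    show volume ((fun t : Fin n → ℝ => (c : Fin n → ℝ) + t) ⁻¹' s) = volume s
    exact (measurePreserving_add_left volume (c : Fin n → ℝ)).measure_preimage hs.nullMeasurableSet
  have hmeas : ∀ (c : Fin n → ℝ), Measurable (fun t => D.indicator (fun _ => (1:ℝ≥0∞)) (c - t)) :=
    fun c => (measurable_one.indicator hD).comp (measurable_const.sub measurable_id)
  rw [lintegral_tsum (fun p => (hmeas _).aemeasurable)]
  have hpre : ∀ c : Fin n → ℝ, MeasurableSet ((fun t => c - t) ⁻¹' D) :=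
    fun c => (measurable_const.sub measurable_id) hD
  have hterm : ∀ c : Fin n → ℝ,
      ∫⁻ t in F, D.indicator (fun _ => (1:ℝ≥0∞)) (c - t) = volume (((fun t => c - t) ⁻¹' D) ∩ F) := by
    intro c
    have h1 : (fun t => D.indicator (fun _ => (1:ℝ≥0∞)) (c - t))
        = ((fun t => c - t) ⁻¹' D).indicator (fun _ => 1) := by
      funext t; by_cases h : c - t ∈ D <;> simp [Set.indicator_apply, h]
    rw [h1, lintegral_indicator_const (hpre c), one_mul, Measure.restrict_apply (hpre c)]
  have hvadd : ∀ (i : Fin k) (lam : L),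
      (fun t => v i + (lam : Fin n → ℝ) - t) ⁻¹' D = lam +ᵥ ((fun t => v i - t) ⁻¹' D) := by
    intro i lam; ext t
    rw [Set.mem_vadd_set_iff_neg_vadd_mem]
    have h2 : v i - (-(lam : Fin n → ℝ) + t) = v i + (lam : Fin n → ℝ) - t := by abel
    simp only [Set.mem_preimage]
    rw [show ((-lam) +ᵥ t : Fin n → ℝ) = -(lam : Fin n → ℝ) + t from rfl, h2]
  have hMP : ∀ i : Fin k, volume ((fun t => v i - t) ⁻¹' D) = volume D := by
    intro i
    have h1 : MeasurePreserving (fun t : Fin n → ℝ => v i - t) volume volume := by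
      have := (measurePreserving_add_left (volume : Measure (Fin n → ℝ)) (v i)).comp
        (Measure.measurePreserving_neg (volume : Measure (Fin n → ℝ)))
      simpa [Function.comp_def, sub_eq_add_neg] using this
    exact h1.measure_preimage hD.nullMeasurableSet
  rw [ENNReal.tsum_prod']
  simp_rw [hterm, hvadd]
  have hinner : ∀ i : Fin k,
      ∑' (lam : L), volume ((lam +ᵥ ((fun t => v i - t) ⁻¹' D)) ∩ F) = volume D := by
    intro i
    rw [← hFd.measure_eq_tsum ((fun t => v i - t) ⁻¹' D), hMP i]
  simp_rw [hinner]
  simp [tsum_fintype, Finset.sum_const, nsmul_eq_mul]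

lemma key_card {n k : ℕ} (B : Matrix (Fin n) (Fin n) ℝ)
    (b : Module.Basis (Fin n) ℝ (Fin n → ℝ))
    (hspan : (Submodule.span ℤ (Set.range ⇑b) : Set (Fin n → ℝ)) = latticeOf B)
    (v : Fin k → (Fin n → ℝ))
    (hv : ∀ i j : Fin k, i ≠ j → v i - v j ∉ latticeOf B)
    (V : Set (Fin n → ℝ)) (hV : V = ⋃ i : Fin k, (fun w => v i + w) '' latticeOf B)
    (S : Set (Fin n → ℝ)) (t : Fin n → ℝ) :
    ∑' (p : Fin k × (Submodule.span ℤ (Set.range ⇑b))),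
      S.indicator (fun _ => (1:ℝ≥0∞)) (v p.1 + (p.2 : Fin n → ℝ) - t)
      = ((((fun x => t + x) '' S) ∩ V).encard : ℝ≥0∞) := by
  set L := Submodule.span ℤ (Set.range ⇑b) with hLdef
  set P : Set (Fin k × L) := {p | v p.1 + (p.2 : Fin n → ℝ) - t ∈ S} with hPdef
  have h1 : ∀ p : Fin k × L,
      S.indicator (fun _ => (1:ℝ≥0∞)) (v p.1 + (p.2 : Fin n → ℝ) - t)
        = P.indicator (fun _ => 1) p := by
    intro p
    by_cases h : p ∈ P
    · rw [Set.indicator_of_mem h, Set.indicator_of_mem (by exact h)]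
    · rw [Set.indicator_of_notMem h, Set.indicator_of_notMem (by exact h)]
  rw [tsum_congr h1, ← tsum_subtype P (fun _ => (1:ℝ≥0∞)), ENNReal.tsum_set_one]
  congr 1
  have hinj : Function.Injective (fun p : Fin k × L => v p.1 + (p.2 : Fin n → ℝ)) := by
    rintro ⟨i, lam⟩ ⟨j, mu⟩ h
    simp only at h
    by_cases hij : i = j
    · subst hij
      simp only [add_right_inj] at h
      exact Prod.ext rfl (Subtype.ext h)
    · exfalso
      apply hv i j hij
      have h2 : v i - v j = ((mu - lam : L) : Fin n → ℝ) := by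
        push_cast
        rw [sub_eq_sub_iff_add_eq_add, h]
        abel
      rw [← hspan, h2]
      exact SetLike.mem_coe.mpr (mu - lam).2
  have himg : (fun p : Fin k × L => v p.1 + (p.2 : Fin n → ℝ)) '' P
      = ((fun x => t + x) '' S) ∩ V := by
    ext y
    constructor
    · rintro ⟨⟨i, lam⟩, hp, rfl⟩
      constructor
      · exact ⟨v i + (lam : Fin n → ℝ) - t, hp, by abel⟩
      · rw [hV]
        exact Set.mem_iUnion.mpr ⟨i, (lam : Fin n → ℝ), by rw [← hspan]; exact lam.2, rfl⟩
    · rintro ⟨⟨x, hx, rfl⟩, hyV⟩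
      rw [hV] at hyV
      obtain ⟨i, w, hwL, hw⟩ := Set.mem_iUnion.mp hyV
      rw [← hspan] at hwL
      refine ⟨⟨i, ⟨w, hwL⟩⟩, ?_, hw⟩
      show v i + w - t ∈ S
      simp only at hw
      rw [hw]
      simpa using hx
  rw [← himg, (hinj.injOn).encard_image]

/-- Inhomogeneous covering theorem: if `vol(D₁)+vol(D₂) > ℓ·det(Λ)/k` and no translate
of `D₁` or `D₂` contains more than `ℓ` points of `V`, then every translate of
`D₁ - D₂` contains at least `ℓ` points of `V - V`. -/
theorem stmt_8 {n k : ℕ} (hk : 0 < k) (B : Matrix (Fin n) (Fin n) ℝ) (hB : B.det ≠ 0)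
    (v : Fin k → (Fin n → ℝ))
    (hv : ∀ i j : Fin k, i ≠ j → v i - v j ∉ latticeOf B)
    (V : Set (Fin n → ℝ)) (hV : V = ⋃ i : Fin k, (fun w => v i + w) '' latticeOf B)
    (ℓ : ℕ) (hℓ : 1 ≤ ℓ)
    (D₁ D₂ : Set (Fin n → ℝ))
    (hD₁b : Bornology.IsBounded D₁) (hD₁m : MeasurableSet D₁)
    (hD₂b : Bornology.IsBounded D₂) (hD₂m : MeasurableSet D₂)
    (hvol : (ℓ : ℝ) * |B.det| / k < (volume D₁).toReal + (volume D₂).toReal)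
    (hfew₁ : ∀ z : Fin n → ℝ, (((fun x => z + x) '' D₁) ∩ V).encard ≤ (ℓ : ℕ∞))
    (hfew₂ : ∀ z : Fin n → ℝ, (((fun x => z + x) '' D₂) ∩ V).encard ≤ (ℓ : ℕ∞)) :
    ∀ z : Fin n → ℝ,
      ((ℓ : ℕ) : ℕ∞) ≤ (((fun x => z + x) '' (D₁ - D₂)) ∩ (V - V)).encard := by
  intro z
  classical
  haveI : Invertible B := B.invertibleOfIsUnitDet (isUnit_iff_ne_zero.mpr hB)
  set e := B.toLinearEquiv' ‹Invertible B› with he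
  set b : Module.Basis (Fin n) ℝ (Fin n → ℝ) := (Pi.basisFun ℝ (Fin n)).map e with hb
  have hbcol : ∀ i j, b i j = B j i := by
    intro i j
    have h1 : b i = e (Pi.single i 1) := by simp [hb, Module.Basis.map_apply]
    have h2 : e (Pi.single i 1) = B.mulVec (Pi.single i 1) := rfl
    rw [h1, h2, Matrix.mulVec_single]; simp
  have hdet : (Matrix.of ⇑b).det = B.det := by
    rw [show Matrix.of ⇑b = B.transpose by ext i j; exact hbcol i j, Matrix.det_transpose]
  have hvolF : volume (ZSpan.fundamentalDomain b) = ENNReal.ofReal |B.det| := by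
    rw [ZSpan.volume_fundamentalDomain, hdet]
  have hspan : (Submodule.span ℤ (Set.range ⇑b) : Set (Fin n → ℝ)) = latticeOf B := by
    ext x
    simp only [SetLike.mem_coe, Submodule.mem_span_range_iff_exists_fun]
    constructor
    · rintro ⟨c, rfl⟩
      exact ⟨c, by ext j; simp [Matrix.mulVec, dotProduct, hbcol, mul_comm]⟩
    · rintro ⟨m, rfl⟩
      exact ⟨m, by ext j; simp [Matrix.mulVec, dotProduct, hbcol, mul_comm]⟩
  set L := Submodule.span ℤ (Set.range ⇑b) with hL
  set F := ZSpan.fundamentalDomain b with hF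
  set D₁' : Set (Fin n → ℝ) := (fun x => z + x) '' D₁ with hD₁'def
  have hD₁'pre : D₁' = (fun x => -z + x) ⁻¹' D₁ := by
    rw [hD₁'def]; exact Set.image_add_left
  have hD₁'m : MeasurableSet D₁' := by
    rw [hD₁'pre]; exact (measurable_const.add measurable_id) hD₁m
  have hvol₁' : volume D₁' = volume D₁ := by
    rw [hD₁'pre]
    exact (measurePreserving_add_left volume (-z)).measure_preimage hD₁m.nullMeasurableSet
  set cnt : Set (Fin n → ℝ) → (Fin n → ℝ) → ℝ≥0∞ := fun S t =>
    ∑' (p : Fin k × L), S.indicator (fun _ => (1:ℝ≥0∞)) (v p.1 + (p.2 : Fin n → ℝ) - t)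
    with hcnt
  have hcntmeas : ∀ S : Set (Fin n → ℝ), MeasurableSet S → Measurable (cnt S) := by
    intro S hS
    exact Measurable.ennreal_tsum fun p =>
      (measurable_one.indicator hS).comp (measurable_const.sub measurable_id)
  have hex : ∃ t : Fin n → ℝ, (ℓ : ℝ≥0∞) < cnt D₁' t + cnt D₂ t := by
    by_contra hcon
    push_neg at hcon
    have hle : ∫⁻ t in F, (cnt D₁' t + cnt D₂ t) ≤ (ℓ : ℝ≥0∞) * volume F := by
      calc ∫⁻ t in F, (cnt D₁' t + cnt D₂ t)
          ≤ ∫⁻ _t in F, (ℓ : ℝ≥0∞) := lintegral_mono (fun t => hcon t)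
        _ = (ℓ : ℝ≥0∞) * volume F := by rw [setLIntegral_const]
    rw [lintegral_add_left (hcntmeas _ hD₁'m)] at hle
    have e1 : ∫⁻ t in F, cnt D₁' t = k * volume D₁' := key_int b v D₁' hD₁'m
    have e2 : ∫⁻ t in F, cnt D₂ t = k * volume D₂ := key_int b v D₂ hD₂m
    rw [e1, e2, hvol₁'] at hle
    rw [show volume F = ENNReal.ofReal |B.det| from hvolF] at hle
    have h1 : volume D₁ ≠ ⊤ := hD₁b.measure_lt_top.ne
    have h2 : volume D₂ ≠ ⊤ := hD₂b.measure_lt_top.ne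
    have hfin : (ℓ : ℝ≥0∞) * ENNReal.ofReal |B.det| ≠ ⊤ :=
      ENNReal.mul_ne_top (ENNReal.natCast_ne_top ℓ) ENNReal.ofReal_ne_top
    have hR := ENNReal.toReal_mono hfin hle
    rw [ENNReal.toReal_add (ENNReal.mul_ne_top (ENNReal.natCast_ne_top k) h1)
          (ENNReal.mul_ne_top (ENNReal.natCast_ne_top k) h2),
        ENNReal.toReal_mul, ENNReal.toReal_mul, ENNReal.toReal_mul,
        ENNReal.toReal_natCast, ENNReal.toReal_natCast,
        ENNReal.toReal_ofReal (abs_nonneg _)] at hR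
    have hk' : (0:ℝ) < k := by exact_mod_cast hk
    rw [div_lt_iff₀ hk'] at hvol
    nlinarith [hvol, hR]
  obtain ⟨t, ht⟩ := hex
  set A := ((fun x => t + x) '' D₁') ∩ V with hA_def
  set Bs := ((fun x => t + x) '' D₂) ∩ V with hBs_def
  have htA : (ℓ : ℝ≥0∞) < (A.encard : ℝ≥0∞) + (Bs.encard : ℝ≥0∞) := by
    have c1 : cnt D₁' t = (A.encard : ℝ≥0∞) := key_card B b hspan v hv V hV D₁' t
    have c2 : cnt D₂ t = (Bs.encard : ℝ≥0∞) := key_card B b hspan v hv V hV D₂ t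
    rwa [c1, c2] at ht
  have hAle : A.encard ≤ (ℓ : ℕ∞) := by
    rw [hA_def, hD₁'def, ← Set.image_comp,
      show ((fun x => t + x) ∘ (fun x => z + x)) = (fun x => (t + z) + x) by
        funext x; simp [add_assoc]]
    exact hfew₁ (t + z)
  have hBle : Bs.encard ≤ (ℓ : ℕ∞) := hfew₂ t
  have hAfin : A.Finite := by
    rw [← Set.encard_ne_top_iff]
    exact (lt_of_le_of_lt hAle (WithTop.coe_lt_top ℓ)).ne
  have hBfin : Bs.Finite := by
    rw [← Set.encard_ne_top_iff]
    exact (lt_of_le_of_lt hBle (WithTop.coe_lt_top ℓ)).ne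
  set As := hAfin.toFinset with hAs
  set Bt := hBfin.toFinset with hBt
  have hAcard : A.encard = (As.card : ℕ∞) := hAfin.encard_eq_coe_toFinset_card
  have hBcard : Bs.encard = (Bt.card : ℕ∞) := hBfin.encard_eq_coe_toFinset_card
  have hnum : ℓ < As.card + Bt.card := by
    rw [hAcard, hBcard] at htA
    simp only [ENat.toENNReal_coe] at htA
    exact_mod_cast htA
  have hacl : As.card ≤ ℓ := by
    rw [hAcard] at hAle; exact_mod_cast hAle
  have hbcl : Bt.card ≤ ℓ := by
    rw [hBcard] at hBle; exact_mod_cast hBle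
  have hAne : As.Nonempty := Finset.card_pos.mp (by omega)
  have hBne : Bt.Nonempty := Finset.card_pos.mp (by omega)
  have htf : IsAddTorsionFree (Fin n → ℝ) :=
    inferInstance
  have hcd : ℓ ≤ (As - Bt).card := by
    have h := cauchy_davenport_of_isAddTorsionFree hAne hBne.neg
    rw [Finset.card_neg] at h
    rw [sub_eq_add_neg]
    omega
  have hsub : (↑(As - Bt) : Set (Fin n → ℝ)) ⊆ ((fun x => z + x) '' (D₁ - D₂)) ∩ (V - V) := by
    intro y hy
    rw [Finset.coe_sub, hAfin.coe_toFinset, hBfin.coe_toFinset] at hy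
    obtain ⟨p, hp, q, hq, rfl⟩ := Set.mem_sub.mp hy
    constructor
    · obtain ⟨x₁, hx₁, rfl⟩ := hp.1
      obtain ⟨x₂, hx₂, rfl⟩ := hq.1
      rw [hD₁'def] at hx₁
      obtain ⟨d₁, hd₁, rfl⟩ := hx₁
      refine ⟨d₁ - x₂, Set.sub_mem_sub hd₁ hx₂, ?_⟩
      show z + (d₁ - x₂) = (t + (z + d₁)) - (t + x₂)
      abel
    · exact Set.sub_mem_sub hp.2 hq.2
  calc ((ℓ : ℕ) : ℕ∞) ≤ ((As - Bt).card : ℕ∞) := by exact_mod_cast hcd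
    _ = (↑(As - Bt) : Set (Fin n → ℝ)).encard := (Set.encard_coe_eq_coe_finsetCard _).symm
    _ ≤ _ := Set.encard_mono hsub
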